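/- The middle order P_n is graded, with rank function given by the number of inversions: for any w ∈ S_n, every maximal chain from the identity to w in P_n has length equal to inv(w) = Σ_i I(w)_i. -/
import Mathlib


/-- The inversion sequence of a permutation `w` of `Fin n` (0-indexed values):
`invSeq w i` counts the values `j < i` appearing after `i` in one-line notation. -/
def invSeq {n : ℕ} (w : Equiv.Perm (Fin n)) (i : Fin n) : ℕ :=
  (Finset.univ.filter (fun j : Fin n => j < i ∧ w.symm i < w.symm j)).card

/-- The middle order on permutations: coordinate-wise comparison of inversion sequences. -/
def midLe {n : ℕ} (v w : Equiv.Perm (Fin n)) : Prop :=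
  ∀ i, invSeq v i ≤ invSeq w i

/-- Number of inversions of a permutation. -/
def inversions {n : ℕ} (w : Equiv.Perm (Fin n)) : ℕ :=
  (Finset.univ.filter (fun p : Fin n × Fin n => p.1 < p.2 ∧ w p.2 < w p.1)).card

/-- `v` is covered by `w` in the middle order. -/
def midCovBy {n : ℕ} (v w : Equiv.Perm (Fin n)) : Prop :=
  midLe v w ∧ v ≠ w ∧ ∀ u, midLe v u → midLe u w → u = v ∨ u = w

open Finset

lemma invSeq_le {n : ℕ} (w : Equiv.Perm (Fin n)) (i : Fin n) : invSeq w i ≤ (i : ℕ) := by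
  classical
  unfold invSeq
  calc (Finset.univ.filter (fun j : Fin n => j < i ∧ w.symm i < w.symm j)).card
      ≤ (Finset.Iio i).card := by
        apply Finset.card_le_card
        intro j hj
        simp only [Finset.mem_filter] at hj
        simpa using hj.2.1
    _ = (i : ℕ) := by simp

lemma sum_invSeq {n : ℕ} (w : Equiv.Perm (Fin n)) : ∑ i, invSeq w i = inversions w := by
  classical
  unfold invSeq inversions
  rw [← Finset.card_sigma]
  refine Finset.card_bij' (fun x _ => (w.symm x.1, w.symm x.2)) (fun p _ => ⟨w p.1, w p.2⟩)
    ?_ ?_ ?_ ?_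
  · rintro ⟨a, b⟩ h
    simp only [Finset.mem_sigma, Finset.mem_filter, Finset.mem_univ, true_and] at h
    simp only [Finset.mem_filter, Finset.mem_univ, true_and, Equiv.apply_symm_apply]
    exact ⟨h.2, h.1⟩
  · rintro ⟨a, b⟩ h
    simp only [Finset.mem_filter, Finset.mem_univ, true_and] at h
    simp only [Finset.mem_sigma, Finset.mem_filter, Finset.mem_univ, true_and,
      Equiv.symm_apply_apply]
    exact ⟨h.2, h.1⟩
  · rintro ⟨a, b⟩ _; simp
  · rintro ⟨a, b⟩ _; simp

/-- Cardinality of `{j | p < σ j}`. -/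
lemma card_gt {n : ℕ} (σ : Equiv.Perm (Fin n)) (p : Fin n) :
    (Finset.univ.filter (fun j => p < σ j)).card = n - 1 - (p : ℕ) := by
  classical
  rw [← Fin.card_Ioi p]
  refine Finset.card_bij' (fun j _ => σ j) (fun x _ => σ.symm x) ?_ ?_ ?_ ?_
  · intro a ha; simp only [Finset.mem_filter] at ha; simpa using ha.2
  · intro a ha; simp only [Finset.mem_Ioi] at ha; simp [ha]
  · intro a _; simp
  · intro a _; simp

lemma invSeq_injective {n : ℕ} : Function.Injective (invSeq (n := n)) := by
  classical
  intro v w h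
  -- show the position functions agree
  suffices hs : ∀ i : Fin n, v.symm i = w.symm i by
    have h2 : v.symm = w.symm := Equiv.ext hs
    simpa using congrArg Equiv.symm h2
  have key : ∀ i : Fin n, (∀ j, i < j → v.symm j = w.symm j) → v.symm i = w.symm i := by
    intro i hj
    set p := v.symm i with hp
    set q := w.symm i with hq
    -- split counting
    have split : ∀ (σ : Equiv.Perm (Fin n)),
        (Finset.univ.filter (fun j => σ.symm i < σ.symm j)).card
        = (Finset.univ.filter (fun j => j < i ∧ σ.symm i < σ.symm j)).card
          + (Finset.univ.filter (fun j => i < j ∧ σ.symm i < σ.symm j)).card := by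
      intro σ
      rw [← Finset.card_union_of_disjoint]
      · congr 1
        ext j
        simp only [Finset.mem_filter, Finset.mem_union, Finset.mem_univ, true_and]
        constructor
        · intro hlt
          have hne : j ≠ i := by
            intro e; rw [e] at hlt; exact lt_irrefl _ hlt
          rcases lt_or_gt_of_ne hne with h1 | h1
          · exact Or.inl ⟨h1, hlt⟩
          · exact Or.inr ⟨h1, hlt⟩
        · rintro (⟨_, hlt⟩ | ⟨_, hlt⟩) <;> exact hlt
      · rw [Finset.disjoint_filter]
        rintro j _ ⟨h1, _⟩ ⟨h2, _⟩
        exact absurd (h1.trans h2) (lt_irrefl j)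
    have hcv := split v
    have hcw := split w
    rw [card_gt] at hcv hcw
    -- the two "above" counts use equal tails
    have htail : (Finset.univ.filter (fun j => i < j ∧ w.symm i < w.symm j)).card
        = (Finset.univ.filter (fun j => i < j ∧ w.symm i < v.symm j)).card := by
      congr 1
      apply Finset.filter_congr
      intro j _
      constructor
      · rintro ⟨h1, h2⟩; exact ⟨h1, by rwa [hj j h1]⟩
      · rintro ⟨h1, h2⟩; exact ⟨h1, by rwa [← hj j h1]⟩
    have he : invSeq v i = invSeq w i := congrFun h i
    -- define g
    set g : Fin n → ℕ := fun x => (Finset.univ.filter (fun j => i < j ∧ x < v.symm j)).card with hg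
    have h1 : invSeq v i + g p = n - 1 - (p : ℕ) := by
      unfold invSeq; rw [← hp] at hcv ⊢; exact hcv.symm
    have h2 : invSeq w i + g q = n - 1 - (q : ℕ) := by
      unfold invSeq
      rw [← hq] at hcw htail ⊢
      rw [hcw, htail]
    have hpn : (p : ℕ) < n := p.isLt
    have hqn : (q : ℕ) < n := q.isLt
    have hsum : g p + (p : ℕ) = g q + (q : ℕ) := by omega
    -- show p = q by the strict monotonicity argument
    by_contra hne
    have hne' : p ≠ q := fun e => hne (by rw [hp, hq] at e; exact e)
    -- the "middle count" bound, stated for any a < b with b not a tail value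
    have middle : ∀ a b : Fin n, a < b → (∀ j, i < j → v.symm j ≠ b) →
        g a ≤ g b + ((b : ℕ) - (a : ℕ) - 1) := by
      intro a b hab hnb
      have hsub : (Finset.univ.filter (fun j => i < j ∧ a < v.symm j)) ⊆
          (Finset.univ.filter (fun j => i < j ∧ b < v.symm j))
          ∪ (Finset.univ.filter (fun j => i < j ∧ a < v.symm j ∧ v.symm j < b)) := by
        intro j hjm
        simp only [Finset.mem_filter, Finset.mem_union, Finset.mem_univ, true_and] at hjm ⊢
        obtain ⟨hij, haj⟩ := hjm
        rcases lt_trichotomy (v.symm j) b with h' | h' | h'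
        · exact Or.inr ⟨hij, haj, h'⟩
        · exact absurd h' (hnb j hij)
        · exact Or.inl ⟨hij, h'⟩
      have hmidcard : (Finset.univ.filter
          (fun j => i < j ∧ a < v.symm j ∧ v.symm j < b)).card ≤ ((b : ℕ) - (a : ℕ) - 1) := by
        rw [← Fin.card_Ioo a b]
        apply Finset.card_le_card_of_injOn (fun j => v.symm j)
        · intro j hjm
          simp only [Finset.mem_coe, Finset.mem_filter, Finset.mem_univ, true_and] at hjm
          simp [Finset.mem_Ioo, hjm.2.1, hjm.2.2]
        · intro x _ y _ hxy
          exact v.symm.injective hxy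
      calc g a ≤ (Finset.univ.filter (fun j => i < j ∧ b < v.symm j)
            ∪ Finset.univ.filter (fun j => i < j ∧ a < v.symm j ∧ v.symm j < b)).card :=
            Finset.card_le_card hsub
        _ ≤ g b + ((b : ℕ) - (a : ℕ) - 1) := by
            refine le_trans (Finset.card_union_le _ _) ?_
            exact Nat.add_le_add le_rfl hmidcard
    rcases lt_or_gt_of_ne hne' with hlt | hlt
    · -- p < q; q is not a tail value of v.symm
      have hnb : ∀ j, i < j → v.symm j ≠ q := by
        intro j hij e
        rw [hj j hij] at e
        have hji : j = i := w.symm.injective (by rw [e, hq])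
        rw [hji] at hij
        exact lt_irrefl i hij
      have := middle p q hlt hnb
      have hv : (p : ℕ) < (q : ℕ) := hlt
      omega
    · -- q < p; p is not a tail value of v.symm, since v.symm j = p → j = i
      have hnb : ∀ j, i < j → v.symm j ≠ p := by
        intro j hij e
        have hji : j = i := v.symm.injective (by rw [e, hp])
        rw [hji] at hij
        exact lt_irrefl i hij
      have := middle q p hlt hnb
      have hv : (q : ℕ) < (p : ℕ) := hlt
      omega
  have : ∀ k : ℕ, ∀ i : Fin n, n - (i : ℕ) ≤ k → v.symm i = w.symm i := by
    intro k
    induction k with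
    | zero => intro i hi; exact absurd hi (by have := i.isLt; omega)
    | succ k ih =>
      intro i hi
      refine key i (fun j hjlt => ih j ?_)
      have h1 : (i : ℕ) < (j : ℕ) := hjlt
      omega
  intro i
  exact this n i (by omega)

lemma invSeq_surjective {n : ℕ} (e : Fin n → ℕ) (he : ∀ i, e i ≤ (i : ℕ)) :
    ∃ w : Equiv.Perm (Fin n), invSeq w = e := by
  classical
  let Φ : Equiv.Perm (Fin n) → (∀ i : Fin n, Fin ((i : ℕ) + 1)) :=
    fun w i => ⟨invSeq w i, Nat.lt_succ_of_le (invSeq_le w i)⟩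
  have hinj : Function.Injective Φ := by
    intro v w h
    apply invSeq_injective
    funext i
    have := congrFun h i
    simpa [Φ, Fin.ext_iff] using this
  have hcard : Fintype.card (∀ i : Fin n, Fin ((i : ℕ) + 1)) = Fintype.card (Equiv.Perm (Fin n)) := by
    rw [Fintype.card_pi, Fintype.card_perm, Fintype.card_fin]
    simp only [Fintype.card_fin]
    rw [Fin.prod_univ_eq_prod_range (fun i => i + 1) n]
    exact Finset.prod_range_add_one_eq_factorial n
  have hbij : Function.Bijective Φ :=
    (Fintype.bijective_iff_injective_and_card Φ).2 ⟨hinj, hcard.symm⟩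
  obtain ⟨w, hw⟩ := hbij.2 (fun i => ⟨e i, Nat.lt_succ_of_le (he i)⟩)
  refine ⟨w, funext fun i => ?_⟩
  have := congrFun hw i
  simpa [Φ, Fin.ext_iff] using this

lemma inversions_one {n : ℕ} : inversions (1 : Equiv.Perm (Fin n)) = 0 := by
  unfold inversions
  rw [Finset.card_eq_zero, Finset.filter_eq_empty_iff]
  rintro ⟨a, b⟩ _ ⟨h1, h2⟩
  simp only [Equiv.Perm.coe_one, id_eq] at h2
  exact lt_irrefl _ (h1.trans h2)

lemma cov_step {n : ℕ} {v w : Equiv.Perm (Fin n)} (h : midCovBy v w) :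
    inversions w = inversions v + 1 := by
  classical
  obtain ⟨hle, hne, hcov⟩ := h
  have hne' : invSeq v ≠ invSeq w := fun e => hne (invSeq_injective e)
  have : ∃ i, invSeq v i < invSeq w i := by
    by_contra hc
    push_neg at hc
    exact hne' (funext fun i => le_antisymm (hle i) (hc i))
  obtain ⟨i, hi⟩ := this
  -- intermediate element
  obtain ⟨u, hu⟩ := invSeq_surjective (Function.update (invSeq v) i (invSeq v i + 1))
    (by
      intro j
      rcases eq_or_ne j i with rfl | hji
      · rw [Function.update_self]
        exact le_trans hi (invSeq_le w j)
      · rw [Function.update_of_ne hji]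
        exact invSeq_le v j)
  have hvu : midLe v u := by
    intro j
    rw [hu]
    rcases eq_or_ne j i with rfl | hji
    · rw [Function.update_self]; omega
    · rw [Function.update_of_ne hji]
  have huw : midLe u w := by
    intro j
    rw [hu]
    rcases eq_or_ne j i with rfl | hji
    · rw [Function.update_self]; omega
    · rw [Function.update_of_ne hji]; exact hle j
  rcases hcov u hvu huw with rfl | rfl
  · exfalso
    have := congrFun hu i
    rw [Function.update_self] at this
    omega
  · rw [← sum_invSeq, ← sum_invSeq, hu]
    rw [Finset.sum_update_of_mem (Finset.mem_univ i)]
    rw [Finset.sum_eq_sum_sdiff_singleton_add (Finset.mem_univ i) (invSeq v)]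
    omega

theorem middle_order_graded (n : ℕ) (w : Equiv.Perm (Fin n)) (m : ℕ)
    (c : Fin (m + 1) → Equiv.Perm (Fin n))
    (h0 : c 0 = 1) (hlast : c (Fin.last m) = w)
    (hcov : ∀ i : Fin m, midCovBy (c i.castSucc) (c i.succ)) :
    m = inversions w := by
  have key : ∀ k : Fin (m + 1), inversions (c k) = (k : ℕ) := by
    intro k
    induction k using Fin.induction with
    | zero => rw [h0, inversions_one]; rfl
    | succ j ih =>
      rw [cov_step (hcov j)]
      rw [ih]
      simp
  have := key (Fin.last m)
  rw [hlast] at this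
  simp at this
  omega
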